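/- Let M : Y → (S → ℝ) satisfy Σ_{s ∈ S} M(y)(s) = 1 for every y ∈ Y (each column of the associated |S| × |Y| matrix sums to one). Suppose q : Y → ℝ is not identically zero and satisfies Σ_{y ∈ Y} q(y)·M(y)(s) = 0 for all s ∈ S. Then: (i) Σ_{y ∈ Y} q(y) = 0; (ii) writing q⁺(y) = max(q(y),0) and q⁻(y) = max(−q(y),0), the normalizations Q1 = q⁺ / Σ_y q⁺(y) and Q2 = q⁻ / Σ_y q⁻(y) are well-defined probability vectors on Y with Q1 ≠ Q2; (iii) Σ_y Q1(y)·M(y)(s) = Σ_y Q2(y)·M(y)(s) for all s ∈ S; and (iv) argmax Q1 and argmax Q2 are disjoint, so in particular argmax Q1 ≠ argmax Q2. -/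
import Mathlib


/-- A probability vector on a finite type `T`. -/
def IsProbVec {T : Type*} [Fintype T] (Q : T → ℝ) : Prop :=
  (∀ t, 0 ≤ Q t) ∧ ∑ t, Q t = 1

/-- The argmax set of a real-valued function on labels. -/
def argmaxSet {Y : Type*} (Q : Y → ℝ) : Set Y := {y | ∀ y', Q y' ≤ Q y}

/-- Normalized positive part of a vector `q : Y → ℝ`. -/
noncomputable def normPos {Y : Type*} [Fintype Y] (q : Y → ℝ) : Y → ℝ :=
  fun y => max (q y) 0 / ∑ y', max (q y') 0

theorem dependence_gives_indistinguishable_distributions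
    {Y : Type*} [Fintype Y] [DecidableEq Y] (hY : 2 ≤ Fintype.card Y)
    (M : Y → Finset Y → ℝ) (hM : ∀ y, ∑ s : Finset Y, M y s = 1)
    (q : Y → ℝ) (hq : q ≠ 0)
    (hker : ∀ s : Finset Y, ∑ y, q y * M y s = 0) :
    (∑ y, q y = 0) ∧
    (0 < ∑ y, max (q y) 0) ∧ (0 < ∑ y, max (-q y) 0) ∧
    IsProbVec (normPos q) ∧ IsProbVec (normPos (fun y => -q y)) ∧
    normPos q ≠ normPos (fun y => -q y) ∧
    (∀ s : Finset Y,
      ∑ y, normPos q y * M y s = ∑ y, normPos (fun y' => -q y') y * M y s) ∧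
    Disjoint (argmaxSet (normPos q)) (argmaxSet (normPos (fun y => -q y))) ∧
    argmaxSet (normPos q) ≠ argmaxSet (normPos (fun y => -q y)) := by
  have hsum : ∑ y, q y = 0 := by
    have : ∑ y, q y = ∑ y, ∑ s : Finset Y, q y * M y s := by
      refine Finset.sum_congr rfl fun y _ => ?_
      rw [← Finset.mul_sum, hM y, mul_one]
    rw [this, Finset.sum_comm]
    simp [hker]
  set A := ∑ y, max (q y) 0 with hA
  set B := ∑ y, max (-q y) 0 with hB
  have hAB : A = B := by
    have : A - B = ∑ y, q y := by
      rw [hA, hB, ← Finset.sum_sub_distrib]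
      exact Finset.sum_congr rfl fun y _ => by
        rcases le_or_gt (q y) 0 with h | h
        · rw [max_eq_right h, max_eq_left (by linarith)]; ring
        · rw [max_eq_left h.le, max_eq_right (by linarith)]; ring
    have := this.trans hsum
    linarith
  obtain ⟨y₀, hy₀⟩ : ∃ y, q y ≠ 0 := by
    by_contra h; push_neg at h; exact hq (funext h)
  have hApos : 0 < A := by
    rcases lt_or_gt_of_ne hy₀ with h | h
    · rw [hAB, hB]
      refine Finset.sum_pos' (fun y _ => le_max_right _ _) ⟨y₀, Finset.mem_univ _, ?_⟩
      rw [max_eq_left (by linarith)]; linarith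
    · refine Finset.sum_pos' (fun y _ => le_max_right _ _) ⟨y₀, Finset.mem_univ _, ?_⟩
      rw [max_eq_left h.le]; exact h
  have hBpos : 0 < B := hAB ▸ hApos
  have hA0 : A ≠ 0 := ne_of_gt hApos
  have hB0 : B ≠ 0 := ne_of_gt hBpos
  have hQ1 : IsProbVec (normPos q) := by
    constructor
    · intro y; exact div_nonneg (le_max_right _ _) hApos.le
    · rw [show (∑ t, normPos q t) = (∑ t, max (q t) 0) / A from by
        rw [Finset.sum_div]; rfl]
      rw [← hA, div_self hA0]
  have hQ2 : IsProbVec (normPos (fun y => -q y)) := by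
    constructor
    · intro y; exact div_nonneg (le_max_right _ _) hBpos.le
    · rw [show (∑ t, normPos (fun y => -q y) t) = (∑ t, max (-q t) 0) / B from by
        rw [Finset.sum_div]; rfl]
      rw [← hB, div_self hB0]
  have hdiff : ∀ y, normPos q y - normPos (fun y' => -q y') y = q y / A := by
    intro y
    show max (q y) 0 / A - max (-q y) 0 / B = q y / A
    rw [← hAB, div_sub_div_same]
    congr 1
    rcases le_or_gt (q y) 0 with h | h
    · rw [max_eq_right h, max_eq_left (by linarith)]; ring
    · rw [max_eq_left h.le, max_eq_right (by linarith)]; ring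
  have hne : normPos q ≠ normPos (fun y => -q y) := by
    intro h
    have := hdiff y₀
    rw [h, sub_self] at this
    exact hy₀ (by field_simp at this; linarith [this])
  have hsame : ∀ s : Finset Y,
      ∑ y, normPos q y * M y s = ∑ y, normPos (fun y' => -q y') y * M y s := by
    intro s
    rw [← sub_eq_zero, ← Finset.sum_sub_distrib]
    have : ∀ y, normPos q y * M y s - normPos (fun y' => -q y') y * M y s
        = (q y * M y s) / A := by
      intro y
      rw [← sub_mul, hdiff y, div_mul_eq_mul_div]
    simp_rw [this, ← Finset.sum_div, hker s, zero_div]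
  have hpos1 : ∀ y, y ∈ argmaxSet (normPos q) → 0 < q y := by
    intro y hy
    obtain ⟨y₁, _, h1⟩ : ∃ y₁ ∈ Finset.univ, 0 < max (q y₁) 0 := by
      by_contra h; push_neg at h
      have : A ≤ 0 := Finset.sum_nonpos fun y hy => h y hy
      linarith
    have h2 : 0 < normPos q y₁ := div_pos h1 hApos
    have := hy y₁
    have h3 : 0 < normPos q y := lt_of_lt_of_le h2 this
    have : 0 < max (q y) 0 := by
      by_contra h
      push_neg at h
      have : max (q y) 0 = 0 := le_antisymm h (le_max_right _ _)
      rw [normPos, this, zero_div] at h3; linarith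
    rcases lt_or_ge 0 (q y) with h | h
    · exact h
    · rw [max_eq_right h] at this; linarith
  have hpos2 : ∀ y, y ∈ argmaxSet (normPos (fun y' => -q y')) → q y < 0 := by
    intro y hy
    obtain ⟨y₁, _, h1⟩ : ∃ y₁ ∈ Finset.univ, 0 < max (-q y₁) 0 := by
      by_contra h; push_neg at h
      have : B ≤ 0 := Finset.sum_nonpos fun y hy => h y hy
      linarith
    have h2 : 0 < normPos (fun y' => -q y') y₁ := div_pos h1 hBpos
    have h3 : 0 < normPos (fun y' => -q y') y := lt_of_lt_of_le h2 (hy y₁)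
    have : 0 < max (-q y) 0 := by
      by_contra h
      push_neg at h
      have : max (-q y) 0 = 0 := le_antisymm h (le_max_right _ _)
      rw [normPos] at h3
      simp only [this, zero_div] at h3; linarith
    rcases lt_or_ge (q y) 0 with h | h
    · exact h
    · rw [max_eq_right (by linarith)] at this; linarith
  have hdisj : Disjoint (argmaxSet (normPos q)) (argmaxSet (normPos (fun y => -q y))) := by
    rw [Set.disjoint_left]
    intro y h1 h2
    exact absurd (hpos1 y h1) (not_lt.mpr (hpos2 y h2).le)
  refine ⟨hsum, hApos, hBpos, hQ1, hQ2, hne, hsame, hdisj, ?_⟩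
  intro h
  have hne' : Nonempty Y := Fintype.card_pos_iff.mp (by omega)
  obtain ⟨y, hy⟩ := Finite.exists_max (normPos q)
  have hy1 : y ∈ argmaxSet (normPos q) := hy
  have hy2 : y ∈ argmaxSet (normPos (fun y' => -q y')) := h ▸ hy1
  exact Set.disjoint_left.mp hdisj hy1 hy2
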